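/- Let P be an irreducible row-stochastic matrix on finite X with positive entries and stationary distribution π. Define P̃_e(x,x') = √(P(x,x')·P*(x,x')) = √(P(x,x')P(x',x)π(x')/π(x)). Let ρ be the Perron–Frobenius eigenvalue of P̃_e and v its positive right eigenvector, and set P_e(x,x') = P̃_e(x,x')v(x')/(ρ v(x)). Then P_e is a row-stochastic reversible matrix. Moreover, the vector x ↦ √(π(x)) is a right eigenvector of the symmetric matrix S(x,x') = √(P(x,x')P(x',x)) when P is reversible. -/

import Mathlib

/-- The exponential reversiblization P_e, obtained by
Perron–Frobenius rescaling of P̃_e(x,x') = √(P(x,x')P*(x,x')), is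
row-stochastic and reversible; moreover when P is reversible, √π is a right
eigenvector of the symmetric matrix S(x,x') = √(P(x,x')P(x',x)). -/
theorem exponential_reversiblization {X : Type*} [Fintype X]
    (P : Matrix X X ℝ) (π : X → ℝ)
    (hPpos : ∀ x x', 0 < P x x')
    (hProw : ∀ x, ∑ x', P x x' = 1)
    (hπpos : ∀ x, 0 < π x) (hπsum : ∑ x, π x = 1)
    (hstat : ∀ x', ∑ x, π x * P x x' = π x')
    (Pt : Matrix X X ℝ)
    (hPt : ∀ x x', Pt x x' = Real.sqrt (P x x' * (π x' * P x' x / π x)))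
    (ρ : ℝ) (v : X → ℝ) (hρ : 0 < ρ) (hv : ∀ x, 0 < v x)
    (heig : ∀ x, ∑ x', Pt x x' * v x' = ρ * v x)
    (Pe : Matrix X X ℝ)
    (hPe : ∀ x x', Pe x x' = Pt x x' * v x' / (ρ * v x)) :
    ((∀ x x', 0 < Pe x x') ∧ (∀ x, ∑ x', Pe x x' = 1) ∧
      ∃ πe : X → ℝ, (∀ x, 0 < πe x) ∧ (∑ x, πe x = 1) ∧
        (∀ x', ∑ x, πe x * Pe x x' = πe x') ∧
        (∀ x x', πe x * Pe x x' = πe x' * Pe x' x)) ∧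
    ((∀ x x', π x * P x x' = π x' * P x' x) →
      ∀ x, ∑ x', Real.sqrt (P x x' * P x' x) * Real.sqrt (π x') =
        Real.sqrt (π x)) := by
  have hne : (Finset.univ : Finset X).Nonempty := by
    rcases (Finset.univ : Finset X).eq_empty_or_nonempty with h | h
    · rw [h, Finset.sum_empty] at hπsum; norm_num at hπsum
    · exact h
  -- positivity of Pt
  have hPtpos : ∀ x x', 0 < Pt x x' := by
    intro x x'
    rw [hPt]
    apply Real.sqrt_pos.2
    have := hPpos x x'; have := hPpos x' x; have := hπpos x; have := hπpos x'
    positivity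
  -- key symmetry: π x * Pt x x' = π x' * Pt x' x
  have hsym : ∀ x x', π x * Pt x x' = π x' * Pt x' x := by
    intro x x'
    have key : ∀ a b : X, π a * Pt a b =
        Real.sqrt (π a * π b * P a b * P b a) := by
      intro a b
      rw [hPt]
      rw [show π a * Real.sqrt (P a b * (π b * P b a / π a)) =
          Real.sqrt ((π a)^2) * Real.sqrt (P a b * (π b * P b a / π a)) by
        rw [Real.sqrt_sq (hπpos a).le]]
      rw [← Real.sqrt_mul (by positivity)]
      congr 1
      field_simp [(hπpos a).ne']
    rw [key, key, show π x * π x' * P x x' * P x' x = π x' * π x * P x' x * P x x' by ring]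
  -- positivity of Pe
  have hPepos : ∀ x x', 0 < Pe x x' := by
    intro x x'
    rw [hPe]
    exact div_pos (mul_pos (hPtpos x x') (hv x')) (mul_pos hρ (hv x))
  have hPerow : ∀ x, ∑ x', Pe x x' = 1 := by
    intro x
    have hd : (ρ * v x) ≠ 0 := (mul_pos hρ (hv x)).ne'
    rw [show (∑ x', Pe x x') = (∑ x', Pt x x' * v x') / (ρ * v x) by
      rw [Finset.sum_div]; exact Finset.sum_congr rfl fun x' _ => hPe x x']
    rw [heig x, div_self hd]
  set Z : ℝ := ∑ x, π x * v x ^ 2 with hZ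
  have hZpos : 0 < Z := by
    apply Finset.sum_pos _ hne
    intro i _
    exact mul_pos (hπpos i) (pow_pos (hv i) 2)
  have lhs : ∀ a b : X, (π a * v a ^ 2 / Z) * (Pt a b * v b / (ρ * v a)) =
      (π a * Pt a b) * (v a * v b) / (Z * ρ) := by
    intro a b
    field_simp [(hv a).ne']
  refine ⟨⟨hPepos, hPerow, ?_⟩, ?_⟩
  · -- reversibility with πe x = π x * v x ^ 2 / Z
    refine ⟨fun x => π x * v x ^ 2 / Z, ?_, ?_, ?_, ?_⟩
    · intro x; have := hπpos x; have := hv x; positivity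
    · rw [← Finset.sum_div, div_self hZpos.ne']
    · -- stationarity, derived from detailed balance + row sums
      have hdb : ∀ x x', (π x * v x ^ 2 / Z) * Pe x x' =
          (π x' * v x' ^ 2 / Z) * Pe x' x := by
        intro x x'
        simp only [hPe]
        rw [lhs, lhs, hsym x x']
        ring
      intro x'
      calc ∑ x, (π x * v x ^ 2 / Z) * Pe x x'
          = ∑ x, (π x' * v x' ^ 2 / Z) * Pe x' x := by
            exact Finset.sum_congr rfl fun x _ => hdb x x'
        _ = (π x' * v x' ^ 2 / Z) * ∑ x, Pe x' x := by rw [Finset.mul_sum]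
        _ = π x' * v x' ^ 2 / Z := by rw [hPerow x', mul_one]
    · intro x x'
      simp only [hPe]
      rw [lhs, lhs, hsym x x']
      ring
  · -- second part
    intro hrev x
    have hterm : ∀ x', Real.sqrt (P x x' * P x' x) * Real.sqrt (π x') =
        P x x' * Real.sqrt (π x) := by
      intro x'
      rw [← Real.sqrt_mul (by have := hPpos x x'; have := hPpos x' x; positivity)]
      have h : P x x' * P x' x * π x' = (P x x')^2 * π x := by
        linear_combination (-(P x x')) * (hrev x x')
      rw [h, Real.sqrt_mul (by positivity), Real.sqrt_sq (hPpos x x').le]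
    calc ∑ x', Real.sqrt (P x x' * P x' x) * Real.sqrt (π x')
        = ∑ x', P x x' * Real.sqrt (π x) :=
          Finset.sum_congr rfl fun x' _ => hterm x'
      _ = (∑ x', P x x') * Real.sqrt (π x) := by rw [Finset.sum_mul]
      _ = Real.sqrt (π x) := by rw [hProw x, one_mul]
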